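/- For every β > 0 and h > 0, the equation z = tanh(β(z+h)) has a largest solution m⁺(β,h) ∈ (0,1), and at this solution 1 - β(1 - m⁺(β,h)²) > 0, so that σ²(β,h) := (1 - m⁺(β,h)²)/(1 - β(1 - m⁺(β,h)²)) > 0. -/

import Mathlib

private lemma my_tanh_lt_one (x : ℝ) : Real.tanh x < 1 := by
  rw [Real.tanh_eq_sinh_div_cosh]
  exact (div_lt_one (Real.cosh_pos x)).2 (Real.sinh_lt_cosh x)

private lemma my_neg_one_lt_tanh (x : ℝ) : -1 < Real.tanh x := by
  have h := Real.sinh_lt_cosh (-x)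
  rw [Real.sinh_neg, Real.cosh_neg] at h
  rw [Real.tanh_eq_sinh_div_cosh]
  rw [lt_div_iff₀ (Real.cosh_pos x)]
  linarith

private lemma my_tanh_sq_lt_one (x : ℝ) : Real.tanh x ^ 2 < 1 := by
  nlinarith [my_tanh_lt_one x, my_neg_one_lt_tanh x]

private lemma my_hasDerivAt_tanh (x : ℝ) :
    HasDerivAt Real.tanh (1 - Real.tanh x ^ 2) x := by
  have hc := Real.cosh_pos x
  have h := (Real.hasDerivAt_sinh x).div (Real.hasDerivAt_cosh x) hc.ne'
  have heq : (Real.cosh x * Real.cosh x - Real.sinh x * Real.sinh x) / Real.cosh x ^ 2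
      = 1 - Real.tanh x ^ 2 := by
    rw [Real.tanh_eq_sinh_div_cosh]
    have h1 := Real.cosh_sq_sub_sinh_sq x
    field_simp
  have hfun : Real.tanh = fun y => Real.sinh y / Real.cosh y := by
    funext y; exact Real.tanh_eq_sinh_div_cosh y
  rw [hfun]
  rw [hfun] at heq
  exact heq ▸ h

private lemma my_tanh_strictMono : StrictMono Real.tanh := by
  apply strictMono_of_deriv_pos
  intro x
  rw [(my_hasDerivAt_tanh x).deriv]
  linarith [my_tanh_sq_lt_one x]

private lemma my_tanh_pos {x : ℝ} (hx : 0 < x) : 0 < Real.tanh x := by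
  have := my_tanh_strictMono hx
  simpa [Real.tanh_zero] using this

/-- For `β > 0` and `h > 0`, the equation `z = tanh(β(z+h))` has a largest solution
`m⁺(β,h) ∈ (0,1)`, and at this solution `1 - β(1 - m²) > 0`, so that
`σ²(β,h) = (1-m²)/(1 - β(1-m²)) > 0`. -/
theorem curie_weiss_external_field_fixed_point (β h : ℝ) (hβ : 0 < β) (hh : 0 < h) :
    ∃ m ∈ Set.Ioo (0 : ℝ) 1,
      m = Real.tanh (β * (m + h)) ∧
      (∀ z : ℝ, z = Real.tanh (β * (z + h)) → z ≤ m) ∧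
      0 < 1 - β * (1 - m ^ 2) ∧
      0 < (1 - m ^ 2) / (1 - β * (1 - m ^ 2)) := by
  set f : ℝ → ℝ := fun z => Real.tanh (β * (z + h)) with hfdef
  have hf : ∀ z : ℝ, HasDerivAt f (β * (1 - Real.tanh (β * (z + h)) ^ 2)) z := by
    intro z
    have hinner : HasDerivAt (fun z : ℝ => β * (z + h)) β z := by
      simpa using ((hasDerivAt_id z).add_const h).const_mul β
    have := (my_hasDerivAt_tanh (β * (z + h))).comp z hinner
    simpa [mul_comm, hfdef, Function.comp_def] using this
  have hfc : Continuous f := by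
    rw [continuous_iff_continuousAt]
    exact fun z => (hf z).continuousAt
  -- a fixed point in (0,1)
  have hf0 : 0 < f 0 := by
    simpa [hfdef] using my_tanh_pos (by positivity : (0:ℝ) < β * (0 + h))
  have hf1 : f 1 < 1 := my_tanh_lt_one _
  have hIVT : ∃ x ∈ Set.Icc (0:ℝ) 1, f x - x = 0 := by
    have hcg : ContinuousOn (fun z => f z - z) (Set.Icc (0:ℝ) 1) :=
      (hfc.sub continuous_id).continuousOn
    have h0 : (0:ℝ) ∈ Set.Icc (f 1 - 1) (f 0 - 0) := by
      constructor <;> simp <;> linarith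
    have := intermediate_value_Icc' (by norm_num : (0:ℝ) ≤ 1) hcg h0
    obtain ⟨x, hx, hfx⟩ := this
    exact ⟨x, hx, hfx⟩
  obtain ⟨x, hx, hfx⟩ := hIVT
  have hxfix : x = f x := by linarith
  have hx0 : 0 < x := by
    rcases lt_or_eq_of_le hx.1 with h' | h'
    · exact h'
    · exfalso; rw [← h'] at hxfix; rw [← hxfix] at hf0; linarith
  -- the set of fixed points
  set S : Set ℝ := {z : ℝ | z = f z} with hSdef
  have hSne : S.Nonempty := ⟨x, hxfix⟩
  have hSbdd : BddAbove S := by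
    refine ⟨1, fun z hz => ?_⟩
    have : z = f z := hz
    have := my_tanh_lt_one (β * (z + h))
    rw [hSdef] at hz
    simp only [Set.mem_setOf_eq] at hz
    linarith [hz ▸ this, (my_tanh_lt_one (β * (z + h)))]
  have hSclosed : IsClosed S := isClosed_eq continuous_id hfc
  set m := sSup S with hmdef
  have hmS : m ∈ S := hSclosed.csSup_mem hSne hSbdd
  have hmfix : m = f m := hmS
  have hxm : x ≤ m := le_csSup hSbdd hxfix
  have hm0 : 0 < m := lt_of_lt_of_le hx0 hxm
  have hm1 : m < 1 := by
    have := my_tanh_lt_one (β * (m + h)); linarith [hmfix ▸ this]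
  -- derivative bound via MVT
  have hmvt := exists_hasDerivAt_eq_slope f
      (fun z => β * (1 - Real.tanh (β * (z + h)) ^ 2)) hm0
      hfc.continuousOn (fun z _ => hf z)
  obtain ⟨c, hc, hceq⟩ := hmvt
  have hth : 0 < Real.tanh (β * (0 + h)) := my_tanh_pos (by positivity)
  have htm : Real.tanh (β * (c + h)) < Real.tanh (β * (m + h)) := by
    apply my_tanh_strictMono
    have := hc.2
    nlinarith
  have htc : 0 < Real.tanh (β * (c + h)) := by
    apply my_tanh_pos
    have := hc.1; nlinarith
  have hslope : β * (1 - Real.tanh (β * (c + h)) ^ 2) = (f m - f 0) / m := by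
    simpa using hceq
  have hfm : f m = m := hmfix.symm
  have hfm0 : f 0 = Real.tanh (β * (0 + h)) := rfl
  have hkey : β * (1 - m ^ 2) < 1 := by
    have h1 : Real.tanh (β * (c + h)) ^ 2 < m ^ 2 := by
      have : Real.tanh (β * (m + h)) = m := hmfix.symm
      nlinarith [htm, htc]
    have h2 : β * (1 - m ^ 2) < β * (1 - Real.tanh (β * (c + h)) ^ 2) := by
      nlinarith
    have h3 : (f m - f 0) / m < 1 := by
      rw [hfm, hfm0, div_lt_one hm0]
      linarith
    linarith [hslope ▸ h2]
  have hnum : 0 < 1 - m ^ 2 := by nlinarith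
  have hden : 0 < 1 - β * (1 - m ^ 2) := by linarith
  exact ⟨m, ⟨hm0, hm1⟩, hmfix, fun z hz => le_csSup hSbdd hz, hden, div_pos hnum hden⟩
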